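/- There exists a morphism of directed hypergraphs f: G → H and an integer c = 2 such that the map on paths induced by f does not carry the 2-connective path complex 𝔠²(G) into 𝔠²(H); i.e., the c-connective path complex construction is not functorial for c ≥ 2. Concretely: for G with vertices {1,2,3,4} and arrows e₁ = ({1} → {2,3}), e₂ = ({1} → {2,4}), and H with vertices {a,b,c} and single arrow ({a} → {b,c}), the morphism given by f(1)=a, f(2)=b, f(3)=f(4)=c is a morphism of directed hypergraphs, the path (1,2) lies in 𝔠²(G), but its image (a,b) does not lie in 𝔠²(H). -/

import Mathlib

/-- A directed hypergraph: a vertex type, an arrow type, and origin/end subsets. -/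
structure DiHyp where
  V : Type
  E : Type
  orig : E → Set V
  dest : E → Set V

/-- The axioms of Definition 2.1: origins and ends are non-empty and disjoint,
and the union of origins and ends of all arrows is the whole vertex set. -/
def DiHyp.IsLegal (G : DiHyp) : Prop :=
  (∀ e, (G.orig e).Nonempty) ∧ (∀ e, (G.dest e).Nonempty) ∧
    (∀ e, Disjoint (G.orig e) (G.dest e)) ∧
    (⋃ e, G.orig e ∪ G.dest e) = Set.univ

/-- A pair of maps is a morphism of directed hypergraphs iff
ℙ(f_V) ∘ φ_G = φ_H ∘ f_E. -/
def DiHyp.IsHom (G H : DiHyp) (fV : G.V → H.V) (fE : G.E → H.E) : Prop :=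
  ∀ e, H.orig (fE e) = fV '' G.orig e ∧ H.dest (fE e) = fV '' G.dest e

/-- Bundled morphism of directed hypergraphs. -/
structure DiHyp.Hom (G H : DiHyp) where
  onV : G.V → H.V
  onE : G.E → H.E
  comm : DiHyp.IsHom G H onV onE

/-- The set P₀₁(G) of subsets occurring as origin or end of some arrow. -/
def DiHyp.P01 (G : DiHyp) : Set (Set G.V) := {C | ∃ e, G.orig e = C ∨ G.dest e = C}

/-- The box product of directed hypergraphs. -/
def DiHyp.box (G H : DiHyp) : DiHyp where
  V := G.V × H.V
  E := (G.E × {C : Set H.V // C ∈ H.P01}) ⊕ ({A : Set G.V // A ∈ G.P01} × H.E)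
  orig := fun e => match e with
    | .inl (e, C) => G.orig e ×ˢ C.1
    | .inr (A, e) => A.1 ×ˢ H.orig e
  dest := fun e => match e with
    | .inl (e, C) => G.dest e ×ˢ C.1
    | .inr (A, e) => A.1 ×ˢ H.dest e

/-- The line digraph I₁, as a directed hypergraph: one arrow {b} → {!b}. -/
def lineI1 (b : Bool) : DiHyp where
  V := Bool
  E := Unit
  orig _ := {b}
  dest _ := {!b}

lemma singleton_mem_P01_lineI1 (b i : Bool) : ({i} : Set Bool) ∈ (lineI1 b).P01 :=
  ⟨(), by cases b <;> cases i <;> simp [lineI1]⟩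

/-- A path complex on V: a set of non-empty finite sequences closed under
deleting the first or the last vertex. -/
def IsPathComplex {V : Type} (P : Set (List V)) : Prop :=
  (∀ p ∈ P, p ≠ []) ∧ ∀ p ∈ P, 2 ≤ p.length → p.tail ∈ P ∧ p.dropLast ∈ P

/-- The connective path complex 𝔠(G): consecutive vertices are equal or joined by
an arrow of G (the first in the origin, the second in the end). -/
def connPaths (G : DiHyp) : Set (List G.V) :=
  {p | p ≠ [] ∧ p.Chain' fun v w => v = w ∨ ∃ e, v ∈ G.orig e ∧ w ∈ G.dest e}

/-- The c-connective path complex 𝔠ᶜ(G): consecutive distinct vertices must be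
joined by at least c distinct arrows of G. -/
def connPathsC (G : DiHyp) (c : ℕ) : Set (List G.V) :=
  {p | p ≠ [] ∧ p.Chain' fun v w => v = w ∨
    ∃ S : Finset G.E, c ≤ S.card ∧ ∀ e ∈ S, v ∈ G.orig e ∧ w ∈ G.dest e}

/-- The directed hypergraph G of Example 3.2 ii): vertices {1,2,3,4} (as Fin 4,
0 ↦ vertex 1, etc.), arrows e₁ = ({1} → {2,3}) and e₂ = ({1} → {2,4}). -/
def Gex : DiHyp where
  V := Fin 4
  E := Fin 2
  orig _ := {0}
  dest i := if i = 0 then {1, 2} else {1, 3}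

/-- The directed hypergraph H of Example 3.2 ii): vertices {a,b,c} (as Fin 3),
one arrow ({a} → {b,c}). -/
def Hex : DiHyp where
  V := Fin 3
  E := Unit
  orig _ := {0}
  dest _ := {1, 2}

/-- The vertex map 1 ↦ a, 2 ↦ b, 3 ↦ c, 4 ↦ c. -/
def fex : Fin 4 → Fin 3 := ![0, 1, 2, 2]

lemma aux_dest (e : Fin 2) : Hex.dest () = fex '' Gex.dest e := by
  ext x
  fin_cases e <;>
    simp only [Hex, Gex, Set.mem_image, Set.mem_insert_iff,
      Set.mem_singleton_iff, reduceIte, Fin.isValue] <;> constructor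
  · rintro (rfl | rfl)
    exacts [⟨1, Or.inl rfl, rfl⟩, ⟨2, Or.inr rfl, rfl⟩]
  · rintro ⟨y, rfl | rfl, rfl⟩ <;> simp [fex]
    exacts [Or.inl rfl, Or.inr rfl]
  · rintro (rfl | rfl)
    exacts [⟨1, Or.inl rfl, rfl⟩, ⟨3, Or.inr rfl, rfl⟩]
  · rintro ⟨y, rfl | rfl, rfl⟩ <;> simp [fex]
    exacts [Or.inl rfl, Or.inr rfl]

lemma aux_mem (e : Fin 2) (_ : e ∈ ({0, 1} : Finset (Fin 2))) :
    (0 : Fin 4) ∈ Gex.orig e ∧ (1 : Fin 4) ∈ Gex.dest e := by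
  fin_cases e <;> simp [Gex] <;> exact ⟨rfl, Or.inl rfl⟩

/-- the 2-connective path complex is not functorial: fex gives a
morphism of directed hypergraphs Gex → Hex, the path (1,2) lies in 𝔠²(Gex), but
its image (a,b) does not lie in 𝔠²(Hex). -/
theorem stmt_9 :
    DiHyp.IsHom Gex Hex fex (fun _ => ()) ∧
    ([0, 1] : List (Fin 4)) ∈ connPathsC Gex 2 ∧
    (([0, 1] : List (Fin 4)).map fex) ∉ connPathsC Hex 2 := by
  refine ⟨?_, ?_, ?_⟩
  · intro e
    refine ⟨?_, aux_dest e⟩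
    ext x
    simp only [Hex, Gex, Set.mem_image, Set.mem_singleton_iff]
    constructor
    · rintro rfl; exact ⟨0, rfl, rfl⟩
    · rintro ⟨y, rfl, rfl⟩; rfl
  · exact ⟨List.cons_ne_nil _ _, List.isChain_cons_cons.2 ⟨Or.inr ⟨({0, 1} : Finset (Fin 2)),
      by decide, aux_mem⟩, List.isChain_singleton _⟩⟩
  · rintro ⟨-, h⟩
    have h1 := (List.isChain_cons_cons.1 h).1
    rcases h1 with h1 | ⟨S, hc, hS⟩
    · have : fex 0 = fex 1 := h1
      simp [fex] at this
    · have hsub : S ⊆ ({()} : Finset Unit) := fun e _ => Finset.mem_singleton.2 rfl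
      have := Finset.card_le_card hsub
      replace this := this.trans_eq (Finset.card_singleton _)
      omega
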